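/- Let G be a connected k-regular finite simple graph on n vertices whose adjacency matrix has exactly four distinct eigenvalues λ_0 = k, λ_1, λ_2, λ_3. Then for every vertex x of G, the average degree of the subgraph G_x induced on the neighbours of x equals λ_1 + λ_2 + λ_3 + (λ_1 λ_2 λ_3)/k + ((k - λ_1)(k - λ_2)(k - λ_3))/(nk). -/

import Mathlib

open SimpleGraph Matrix

/-- The average degree of the local graph `G_x`, the subgraph of `G` induced on the
neighbours of `x`: the sum over neighbours `y` of `x` of the number of neighbours of `y`
inside `N(x)`, divided by the number of neighbours of `x`. -/
noncomputable def avgDegLocal {V : Type*} [Fintype V] [DecidableEq V] (G : SimpleGraph V)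
    [DecidableRel G.Adj] (x : V) : ℝ :=
  (∑ y ∈ G.neighborFinset x, (((G.neighborFinset x).filter (fun z => G.Adj y z)).card : ℝ)) /
    (G.degree x)

set_option linter.unusedTactic false in
set_option linter.unreachableTactic false in
/-- A Hermitian real matrix whose eigenvalues all lie in `{c₀, c₁, c₂, c₃}` is annihilated by
the corresponding product of linear factors. -/
lemma aux_vanish {V : Type*} [Fintype V] [DecidableEq V] (A : Matrix V V ℝ) (hA : A.IsHermitian)
    (c₀ c₁ c₂ c₃ : ℝ)
    (hs : ∀ i, hA.eigenvalues i = c₀ ∨ hA.eigenvalues i = c₁ ∨ hA.eigenvalues i = c₂ ∨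
      hA.eigenvalues i = c₃) :
    (A - c₀ • 1) * ((A - c₁ • 1) * ((A - c₂ • 1) * (A - c₃ • 1))) = 0 := by
  set U : Matrix V V ℝ := (hA.eigenvectorUnitary : Matrix V V ℝ) with hU
  have hUU : star U * U = 1 := (Unitary.mem_iff.mp hA.eigenvectorUnitary.2).1
  have hUU' : U * star U = 1 := (Unitary.mem_iff.mp hA.eigenvectorUnitary.2).2
  have cancel : ∀ t : Matrix V V ℝ, star U * (U * t) = t := by
    intro t; rw [← mul_assoc, hUU, one_mul]
  have key : ∀ c : ℝ, A - c • 1 =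
      U * diagonal (fun i => hA.eigenvalues i - c) * star U := by
    intro c
    have h1 : (c • (1 : Matrix V V ℝ)) = U * (c • 1) * star U := by
      rw [mul_smul_comm, smul_mul_assoc, mul_one, hUU']
    conv_lhs => rw [hA.spectral_theorem, Unitary.conjStarAlgAut_apply, ← hU, h1]
    rw [← sub_mul, ← mul_sub]
    congr 1
    congr 1
    ext i j
    simp [diagonal, Matrix.sub_apply, Matrix.smul_apply, Matrix.one_apply]
    split <;> simp
  rw [key c₀, key c₁, key c₂, key c₃]
  simp only [mul_assoc, cancel]
  rw [← mul_assoc, ← mul_assoc]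
  have : diagonal (fun i => hA.eigenvalues i - c₀) *
      (diagonal (fun i => hA.eigenvalues i - c₁) *
      (diagonal (fun i => hA.eigenvalues i - c₂) *
      diagonal (fun i => hA.eigenvalues i - c₃))) = 0 := by
    simp only [diagonal_mul_diagonal]
    ext i j
    rcases hs i with h | h | h | h <;>
      simp [diagonal, h, Matrix.zero_apply] <;> split <;> simp [h]
  have h2 : (diagonal fun i => hA.eigenvalues i - c₀) *
      ((diagonal fun i => hA.eigenvalues i - c₁) *
      ((diagonal fun i => hA.eigenvalues i - c₂) *
      ((diagonal fun i => hA.eigenvalues i - c₃) * star U))) = 0 := by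
    calc (diagonal fun i => hA.eigenvalues i - c₀) *
        ((diagonal fun i => hA.eigenvalues i - c₁) *
        ((diagonal fun i => hA.eigenvalues i - c₂) *
        ((diagonal fun i => hA.eigenvalues i - c₃) * star U)))
        = ((diagonal fun i => hA.eigenvalues i - c₀) *
          ((diagonal fun i => hA.eigenvalues i - c₁) *
          ((diagonal fun i => hA.eigenvalues i - c₂) *
          (diagonal fun i => hA.eigenvalues i - c₃)))) * star U := by
          simp only [mul_assoc]
      _ = 0 := by rw [this, zero_mul]
  simp only [mul_assoc]
  rw [h2, mul_zero]

theorem four_distinct_eigenvalues_local_average_degree {V : Type*} [Fintype V] [DecidableEq V]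
    (G : SimpleGraph V) [DecidableRel G.Adj] (k : ℕ) (l₁ l₂ l₃ : ℝ)
    (hconn : G.Connected) (hreg : G.IsRegularOfDegree k)
    (hspec : spectrum ℝ (G.adjMatrix ℝ) = {(k : ℝ), l₁, l₂, l₃})
    (hdist : List.Pairwise (· ≠ ·) [(k : ℝ), l₁, l₂, l₃]) :
    ∀ x : V, avgDegLocal G x =
      l₁ + l₂ + l₃ + l₁ * l₂ * l₃ / k +
        ((k : ℝ) - l₁) * ((k : ℝ) - l₂) * ((k : ℝ) - l₃) / ((Fintype.card V : ℝ) * k) := by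
  intro x
  have hne : Nonempty V := hconn.nonempty
  have hn : (0:ℝ) < (Fintype.card V : ℝ) := by exact_mod_cast Fintype.card_pos
  simp only [List.pairwise_cons, List.mem_cons, List.mem_singleton, List.not_mem_nil] at hdist
  have hkl : (k:ℝ) ≠ l₁ := hdist.1 l₁ (by simp)
  have hk0 : (k:ℝ) ≠ 0 := by
    intro hk
    have hA0 : G.adjMatrix ℝ = 0 := by
      ext i j
      simp only [adjMatrix_apply, Matrix.zero_apply]
      split
      · next h =>
        exfalso
        have h2 : 0 < G.degree i := by
          rw [← card_neighborFinset_eq_degree]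
          exact Finset.card_pos.mpr ⟨j, (G.mem_neighborFinset i j).mpr h⟩
        rw [hreg i] at h2
        have : (0:ℝ) < k := by exact_mod_cast h2
        exact absurd hk (by linarith)
      · rfl
    have hnt : Nontrivial (Matrix V V ℝ) := by
      refine ⟨1, 0, fun h => ?_⟩
      obtain ⟨v⟩ := hne
      have := congrFun (congrFun h v) v
      simp at this
    have hl1 : l₁ ∈ spectrum ℝ (G.adjMatrix ℝ) := by rw [hspec]; simp
    rw [hA0, spectrum.zero_eq] at hl1
    simp only [Set.mem_singleton_iff] at hl1
    exact hkl (by rw [hk, hl1])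
  set A := G.adjMatrix ℝ with hAdef
  have hA : A.IsHermitian := by
    rw [Matrix.IsHermitian, conjTranspose_eq_transpose_of_trivial]; exact G.isSymm_adjMatrix
  set M := (A - l₁ • 1) * ((A - l₂ • 1) * (A - l₃ • 1)) with hM
  have hvan : (A - (k:ℝ) • 1) * M = 0 := by
    refine aux_vanish A hA (k:ℝ) l₁ l₂ l₃ (fun i => ?_)
    have h0 := hA.eigenvalues_mem_spectrum_real i
    rw [Set.ext_iff] at hspec
    have h2 := (hspec _).mp h0
    simpa using h2
  have hAM : A * M = (k:ℝ) • M := by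
    rw [sub_mul, sub_eq_zero, smul_mul_assoc, one_mul] at hvan
    exact hvan
  have hcol : ∀ i j i', M i j = M i' j := by
    intro i j i'
    have hv : G.lapMatrix ℝ *ᵥ (fun a => M a j) = 0 := by
      ext i''
      rw [Pi.zero_apply, lapMatrix_mulVec_apply, hreg i'']
      have h1 : ∑ u ∈ G.neighborFinset i'', M u j = (A * M) i'' j := by
        rw [adjMatrix_mul_apply]
      rw [h1, hAM]
      simp
    exact (G.lapMatrix_mulVec_eq_zero_iff_forall_reachable (x := fun a => M a j)).mp
      hv i i' (hconn i i')
  have hsymm : ∀ i j, M i j = M j i := by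
    have hF : ∀ r : ℝ, (A - r • 1)ᵀ = A - r • 1 := by
      intro r
      rw [transpose_sub, transpose_smul, transpose_one, G.isSymm_adjMatrix]
    have hc : ∀ r s : ℝ, Commute (A - r • 1) (A - s • 1) := by
      intro r s
      have c1 : Commute A ((s:ℝ) • (1 : Matrix V V ℝ)) := (Commute.one_right A).smul_right s
      have c2 : Commute ((r:ℝ) • (1 : Matrix V V ℝ)) A := (Commute.one_left A).smul_left r
      have c3 : Commute ((r:ℝ) • (1 : Matrix V V ℝ)) ((s:ℝ) • (1 : Matrix V V ℝ)) :=
        ((Commute.one_left (1 : Matrix V V ℝ)).smul_left r).smul_right s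
      exact ((Commute.refl A).sub_right c1).sub_left (c2.sub_right c3)
    have hMt : Mᵀ = M := by
      rw [hM, transpose_mul, transpose_mul, hF, hF, hF]
      calc (A - l₃ • 1)ᵀᵀ * (A - l₂ • 1) * (A - l₁ • 1)
          = (A - l₃ • 1) * (A - l₂ • 1) * (A - l₁ • 1) := by rw [transpose_transpose]
        _ = (A - l₁ • 1) * ((A - l₂ • 1) * (A - l₃ • 1)) := by
            rw [(hc l₃ l₂).eq, mul_assoc, (hc l₃ l₁).eq, ← mul_assoc, (hc l₂ l₁).eq, mul_assoc]
    intro i j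
    conv_rhs => rw [← hMt]
    rfl
  have hconst : ∀ i j, M i j = M x x := by
    intro i j
    calc M i j = M j j := hcol i j j
      _ = M x j := hcol j j x
      _ = M j x := hsymm x j
      _ = M x x := hcol j x x
  have hFmul : ∀ (r c : ℝ), (A - r • 1) *ᵥ (fun _ => c) = fun _ => ((k:ℝ) - r) * c := by
    intro r c
    ext i
    rw [sub_mulVec, Pi.sub_apply, smul_mulVec, one_mulVec, adjMatrix_mulVec_apply]
    rw [Finset.sum_const, card_neighborFinset_eq_degree, hreg i]
    simp [sub_mul]
  have hMone : M *ᵥ (fun _ => (1:ℝ)) =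
      fun _ => ((k:ℝ) - l₁) * (((k:ℝ) - l₂) * (((k:ℝ) - l₃) * 1)) := by
    rw [hM, ← mulVec_mulVec, ← mulVec_mulVec, hFmul, hFmul, hFmul]
  have hMxx : (Fintype.card V : ℝ) * M x x = ((k:ℝ) - l₁) * (((k:ℝ) - l₂) * ((k:ℝ) - l₃)) := by
    have h1 := congrFun hMone x
    rw [mulVec, dotProduct] at h1
    simp only [mul_one] at h1
    calc (Fintype.card V : ℝ) * M x x = ∑ _j : V, M x x := by
          rw [Finset.sum_const, Finset.card_univ, nsmul_eq_mul]
      _ = ∑ j : V, M x j := Finset.sum_congr rfl (fun j _ => (hconst x j).symm)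
      _ = _ := h1
  have hexp : M = A * (A * A) - (l₁ + l₂ + l₃) • (A * A)
      + (l₁ * l₂ + l₁ * l₃ + l₂ * l₃) • A - (l₁ * (l₂ * l₃)) • 1 := by
    rw [hM]
    simp only [mul_sub, sub_mul, smul_mul_assoc, mul_smul_comm, smul_smul, mul_one, one_mul,
      smul_sub, sub_smul, add_smul]
    module
  have hAxx : A x x = 0 := by simp [hAdef]
  have hA2 : (A * A) x x = (k:ℝ) := by
    rw [hAdef, adjMatrix_mul_apply]
    have h : ∀ u ∈ G.neighborFinset x, G.adjMatrix ℝ u x = 1 := fun u hu => by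
      rw [adjMatrix_apply, if_pos ((G.mem_neighborFinset x u).mp hu).symm]
    rw [Finset.sum_congr rfl h, Finset.sum_const, card_neighborFinset_eq_degree, hreg x]
    simp
  have hA3 : (A * (A * A)) x x = ∑ y ∈ G.neighborFinset x,
      (((G.neighborFinset x).filter (fun z => G.Adj y z)).card : ℝ) := by
    rw [hAdef, adjMatrix_mul_apply]
    refine Finset.sum_congr rfl fun y hy => ?_
    rw [adjMatrix_mul_apply]
    simp only [adjMatrix_apply]
    rw [Finset.sum_boole]
    congr 2
    ext z
    simp only [Finset.mem_filter, mem_neighborFinset]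
    constructor
    · rintro ⟨h1, h2⟩; exact ⟨h2.symm, h1⟩
    · rintro ⟨h1, h2⟩; exact ⟨h2, h1.symm⟩
  have key := congrFun (congrFun hexp x) x
  simp only [Matrix.sub_apply, Matrix.add_apply, Matrix.smul_apply, smul_eq_mul,
    Matrix.one_apply_eq] at key
  rw [hA3, hA2, hAxx] at key
  have hMxx' : M x x = ((k:ℝ) - l₁) * (((k:ℝ) - l₂) * ((k:ℝ) - l₃)) / (Fintype.card V : ℝ) := by
    rw [eq_div_iff (ne_of_gt hn), mul_comm]
    exact hMxx
  rw [hMxx'] at key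
  have hS : (∑ y ∈ G.neighborFinset x,
      (((G.neighborFinset x).filter (fun z => G.Adj y z)).card : ℝ)) =
      (l₁ + l₂ + l₃) * (k:ℝ) + l₁ * (l₂ * l₃)
        + ((k:ℝ) - l₁) * (((k:ℝ) - l₂) * ((k:ℝ) - l₃)) / (Fintype.card V : ℝ) := by
    linarith [key]
  rw [avgDegLocal, hreg x, hS]
  field_simp
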